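/- Combinatorial bijection underlying the hook Schur character: standard tableaux of shape λ with entries in the graded ordered set [m+n] (first m indices even, last n odd) are in weight-preserving bijection with pairs consisting of a semistandard tableau of shape μ in the even alphabet {1,...,m} and a semistandard tableau of conjugate skew shape λ'/μ' in the odd alphabet {1,...,n}, over all partitions μ ⊂ λ. -/
import Mathlib


open Finset
open scoped Classical

namespace HookBijection

/-- The cells of the skew diagram `λ/μ` (at most `q` rows, 0-indexed). -/
def cells (q : ℕ) (lam mu : ℕ → ℕ) : Finset (ℕ × ℕ) :=
  ((range q) ×ˢ range ((range q).sup lam)).filter fun p => mu p.1 ≤ p.2 ∧ p.2 < lam p.1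

/-- Semistandard: rows weakly increasing, columns strictly increasing. -/
def SSYT {a : ℕ} (cs : Finset (ℕ × ℕ)) (T : ↥cs → Fin a) : Prop :=
  (∀ (c c' : ↥cs), c.1.1 = c'.1.1 → c'.1.2 = c.1.2 + 1 → T c ≤ T c') ∧
  (∀ (c c' : ↥cs), c.1.2 = c'.1.2 → c'.1.1 = c.1.1 + 1 → T c < T c')

/-- Standard (in the super sense) for the graded alphabet `[m + n]`, the first `m`
letters even and the last `n` odd: rows nondecreasing with repeats only among the
even letters, columns nondecreasing with repeats only among the odd letters. -/
def StdPred (m n : ℕ) (cs : Finset (ℕ × ℕ)) (t : ↥cs → Fin (m + n)) : Prop :=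
  (∀ (c c' : ↥cs), c.1.1 = c'.1.1 → c'.1.2 = c.1.2 + 1 →
    t c ≤ t c' ∧ (t c = t c' → (t c : ℕ) < m)) ∧
  (∀ (c c' : ↥cs), c.1.2 = c'.1.2 → c'.1.1 = c.1.1 + 1 →
    t c ≤ t c' ∧ (t c = t c' → m ≤ (t c : ℕ)))

/-- The partition `μ ⊆ λ` encoded by `f`. -/
def muOf (q : ℕ) (lam : ℕ → ℕ) (f : (i : Fin q) → Fin (lam i + 1)) : ℕ → ℕ :=
  fun i => if h : i < q then (f ⟨i, h⟩ : ℕ) else 0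

/-- The cells of the conjugate skew shape `λ'/μ'`. -/
noncomputable def conjSkewCells (q : ℕ) (lam mu : ℕ → ℕ) : Finset (ℕ × ℕ) :=
  (cells q lam (fun _ => 0) \ cells q mu (fun _ => 0)).image Prod.swap

variable (q m n : ℕ) (lam : ℕ → ℕ)

/-- Standard tableaux of shape `λ` with values in `[m + n]`. -/
def StdTab := {t : ↥(cells q lam (fun _ => 0)) → Fin (m + n) //
  StdPred m n (cells q lam (fun _ => 0)) t}

/-- Pairs: a partition `μ ⊆ λ`, a semistandard tableau of shape `μ` in the even
alphabet `[m]`, and a semistandard tableau of shape `λ'/μ'` in the odd alphabet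
`[n]`. -/
def PairTab :=
  Σ f : {f : (i : Fin q) → Fin (lam i + 1) //
      ∀ i j : Fin q, i ≤ j → (f j : ℕ) ≤ (f i : ℕ)},
    {T : ↥(cells q (muOf q lam f.1) (fun _ => 0)) → Fin m //
        SSYT (cells q (muOf q lam f.1) (fun _ => 0)) T} ×
      {T : ↥(conjSkewCells q lam (muOf q lam f.1)) → Fin n //
        SSYT (conjSkewCells q lam (muOf q lam f.1)) T}

/-- The weight of a standard tableau. -/
noncomputable def wtStd (t : StdTab q m n lam) (a : Fin (m + n)) : ℕ :=
  ((univ : Finset ↥(cells q lam (fun _ => 0))).filter fun c => t.1 c = a).card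

/-- The weight of a pair (letter `a < m` counted in the even tableau, letter
`a ≥ m` counted in the odd tableau, via the canonical embeddings of `[m]` and `[n]`
into `[m+n]`). -/
noncomputable def wtPair (p : PairTab q m n lam) (a : Fin (m + n)) : ℕ :=
  ((univ : Finset ↥(cells q (muOf q lam p.1.1) (fun _ => 0))).filter
      fun c => Fin.castAdd n (p.2.1.1 c) = a).card +
  ((univ : Finset ↥(conjSkewCells q lam (muOf q lam p.1.1))).filter
      fun c => Fin.natAdd m (p.2.2.1 c) = a).card

section Aux

variable {q m n lam}

lemma mem_cells {q0 : ℕ} {f0 : ℕ → ℕ} {p : ℕ × ℕ} :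
    p ∈ cells q0 f0 (fun _ => 0) ↔ p.1 < q0 ∧ p.2 < f0 p.1 := by
  unfold cells
  simp only [Finset.mem_filter, Finset.mem_product, Finset.mem_range]
  constructor
  · rintro ⟨⟨h1, _⟩, _, h3⟩; exact ⟨h1, h3⟩
  · rintro ⟨h1, h2⟩
    exact ⟨⟨h1, lt_of_lt_of_le h2 (Finset.le_sup (Finset.mem_range.2 h1))⟩, Nat.zero_le _, h2⟩

lemma mem_conj {q0 : ℕ} {lam0 nu0 : ℕ → ℕ} {p : ℕ × ℕ} :
    p ∈ conjSkewCells q0 lam0 nu0 ↔ p.2 < q0 ∧ nu0 p.2 ≤ p.1 ∧ p.1 < lam0 p.2 := by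
  unfold conjSkewCells
  simp only [Finset.mem_image, Finset.mem_sdiff, mem_cells]
  constructor
  · rintro ⟨r, ⟨⟨h1, h2⟩, h3⟩, rfl⟩
    refine ⟨h1, ?_, h2⟩
    by_contra h
    push_neg at h
    exact h3 ⟨h1, h⟩
  · rintro ⟨h1, h2, h3⟩
    exact ⟨(p.2, p.1), ⟨⟨h1, h3⟩, fun hh => absurd hh.2 (not_lt.2 h2)⟩, rfl⟩

variable (q m n lam) in
noncomputable def tV (t : StdTab q m n lam) (p : ℕ × ℕ) : ℕ :=
  if h : p ∈ cells q lam (fun _ => 0) then (t.1 ⟨p, h⟩ : ℕ) else 0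

lemma tV_eq (t : StdTab q m n lam) {p : ℕ × ℕ} (h : p ∈ cells q lam (fun _ => 0)) :
    tV q m n lam t p = (t.1 ⟨p, h⟩ : ℕ) := dif_pos h

lemma tV_lt (t : StdTab q m n lam) {p : ℕ × ℕ} (h : p ∈ cells q lam (fun _ => 0)) :
    tV q m n lam t p < m + n := by rw [tV_eq t h]; exact (t.1 ⟨p, h⟩).2

lemma std_row (t : StdTab q m n lam) {i j : ℕ}
    (h1 : (i, j) ∈ cells q lam (fun _ => 0)) (h2 : (i, j + 1) ∈ cells q lam (fun _ => 0)) :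
    tV q m n lam t (i, j) ≤ tV q m n lam t (i, j + 1) ∧
      (tV q m n lam t (i, j) = tV q m n lam t (i, j + 1) → tV q m n lam t (i, j) < m) := by
  have h := t.2.1 ⟨(i, j), h1⟩ ⟨(i, j + 1), h2⟩ rfl rfl
  rw [tV_eq t h1, tV_eq t h2]
  exact ⟨h.1, fun hh => h.2 (Fin.ext hh)⟩

lemma std_col (t : StdTab q m n lam) {i j : ℕ}
    (h1 : (i, j) ∈ cells q lam (fun _ => 0)) (h2 : (i + 1, j) ∈ cells q lam (fun _ => 0)) :
    tV q m n lam t (i, j) ≤ tV q m n lam t (i + 1, j) ∧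
      (tV q m n lam t (i, j) = tV q m n lam t (i + 1, j) → m ≤ tV q m n lam t (i, j)) := by
  have h := t.2.2 ⟨(i, j), h1⟩ ⟨(i + 1, j), h2⟩ rfl rfl
  rw [tV_eq t h1, tV_eq t h2]
  exact ⟨h.1, fun hh => h.2 (Fin.ext hh)⟩

noncomputable def mu0 (t : StdTab q m n lam) (i : ℕ) : ℕ :=
  Nat.find (p := fun k => ¬(k < lam i ∧ tV q m n lam t (i, k) < m))
    ⟨lam i, fun h => lt_irrefl _ h.1⟩

lemma mu0_le (t : StdTab q m n lam) (i : ℕ) : mu0 t i ≤ lam i :=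
  Nat.find_le (fun h => lt_irrefl _ h.1)

lemma lt_mu0_iff (hsupp : ∀ i, q ≤ i → lam i = 0) (t : StdTab q m n lam) (i j : ℕ) :
    j < mu0 t i ↔ j < lam i ∧ tV q m n lam t (i, j) < m := by
  constructor
  · intro h
    exact not_not.1 (Nat.find_min _ h)
  · intro hP
    by_contra h
    push_neg at h
    have key : ∀ k, (k + 1 < lam i ∧ tV q m n lam t (i, k + 1) < m) →
        (k < lam i ∧ tV q m n lam t (i, k) < m) := by
      intro k hk
      have hiq : i < q := by
        by_contra hq
        rw [hsupp i (le_of_not_gt hq)] at hk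
        exact absurd hk.1 (Nat.not_lt_zero _)
      have hk' : k < lam i := Nat.lt_of_succ_lt hk.1
      have hc1 : (i, k) ∈ cells q lam (fun _ => 0) := mem_cells.2 ⟨hiq, hk'⟩
      have hc2 : (i, k + 1) ∈ cells q lam (fun _ => 0) := mem_cells.2 ⟨hiq, hk.1⟩
      exact ⟨hk', lt_of_le_of_lt (std_row t hc1 hc2).1 hk.2⟩
    have mono : ∀ a b : ℕ, a ≤ b → (b < lam i ∧ tV q m n lam t (i, b) < m) →
        (a < lam i ∧ tV q m n lam t (i, a) < m) := by
      intro a b hab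
      induction hab with
      | refl => exact id
      | step _ ih => exact fun hb => ih (key _ hb)
    exact Nat.find_spec (p := fun k => ¬(k < lam i ∧ tV q m n lam t (i, k) < m))
      ⟨lam i, fun hh => lt_irrefl _ hh.1⟩ (mono _ _ h hP)
lemma mu0_succ_le (hlam : ∀ i, lam (i + 1) ≤ lam i) (hsupp : ∀ i, q ≤ i → lam i = 0)
    (t : StdTab q m n lam) (k : ℕ) : mu0 t (k + 1) ≤ mu0 t k := by
  by_contra h
  push_neg at h
  have hk : mu0 t k < mu0 t (k + 1) := h
  have hP := (lt_mu0_iff hsupp t (k + 1) (mu0 t k)).1 hk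
  have hq : k + 1 < q := by
    by_contra hq
    rw [hsupp (k + 1) (le_of_not_gt hq)] at hP
    exact absurd hP.1 (Nat.not_lt_zero _)
  have hlk : mu0 t k < lam k := lt_of_lt_of_le hP.1 (hlam k)
  have hc1 : (k, mu0 t k) ∈ cells q lam (fun _ => 0) :=
    mem_cells.2 ⟨Nat.lt_of_succ_lt hq, hlk⟩
  have hc2 : (k + 1, mu0 t k) ∈ cells q lam (fun _ => 0) := mem_cells.2 ⟨hq, hP.1⟩
  have : mu0 t k < mu0 t k :=
    (lt_mu0_iff hsupp t k (mu0 t k)).2 ⟨hlk, lt_of_le_of_lt (std_col t hc1 hc2).1 hP.2⟩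
  exact lt_irrefl _ this

lemma mu0_anti (hlam : ∀ i, lam (i + 1) ≤ lam i) (hsupp : ∀ i, q ≤ i → lam i = 0)
    (t : StdTab q m n lam) {a b : ℕ} (hab : a ≤ b) : mu0 t b ≤ mu0 t a := by
  induction hab with
  | refl => exact le_rfl
  | step _ ih => exact le_trans (mu0_succ_le hlam hsupp t _) ih

variable (q m n lam) in
noncomputable def fF (hlam : ∀ i, lam (i + 1) ≤ lam i) (hsupp : ∀ i, q ≤ i → lam i = 0)
    (t : StdTab q m n lam) :
    {f : (i : Fin q) → Fin (lam i + 1) // ∀ i j : Fin q, i ≤ j → (f j : ℕ) ≤ (f i : ℕ)} :=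
  ⟨fun i => ⟨mu0 t i, Nat.lt_succ_of_le (mu0_le t i)⟩,
   fun _ _ hij => mu0_anti hlam hsupp t hij⟩

lemma muOf_fF (hlam : ∀ i, lam (i + 1) ≤ lam i) (hsupp : ∀ i, q ≤ i → lam i = 0)
    (t : StdTab q m n lam) {i : ℕ} (hi : i < q) :
    muOf q lam (fF q m n lam hlam hsupp t).1 i = mu0 t i := by
  simp [muOf, fF, hi]

lemma mem_of_mem_mu (hlam : ∀ i, lam (i + 1) ≤ lam i) (hsupp : ∀ i, q ≤ i → lam i = 0)
    (t : StdTab q m n lam) {p : ℕ × ℕ}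
    (hp : p ∈ cells q (muOf q lam (fF q m n lam hlam hsupp t).1) (fun _ => 0)) :
    p ∈ cells q lam (fun _ => 0) ∧ tV q m n lam t p < m ∧ p.2 < mu0 t p.1 := by
  have h := mem_cells.1 hp
  rw [muOf_fF hlam hsupp t h.1] at h
  have h2 := (lt_mu0_iff hsupp t p.1 p.2).1 h.2
  exact ⟨mem_cells.2 ⟨h.1, h2.1⟩, h2.2, h.2⟩

lemma mem_of_mem_conj (hlam : ∀ i, lam (i + 1) ≤ lam i) (hsupp : ∀ i, q ≤ i → lam i = 0)
    (t : StdTab q m n lam) {p : ℕ × ℕ}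
    (hp : p ∈ conjSkewCells q lam (muOf q lam (fF q m n lam hlam hsupp t).1)) :
    (p.2, p.1) ∈ cells q lam (fun _ => 0) ∧ m ≤ tV q m n lam t (p.2, p.1) ∧
      mu0 t p.2 ≤ p.1 := by
  have h := mem_conj.1 hp
  rw [muOf_fF hlam hsupp t h.1] at h
  have hm : ¬ (p.1 < lam p.2 ∧ tV q m n lam t (p.2, p.1) < m) := by
    intro hc
    exact absurd ((lt_mu0_iff hsupp t p.2 p.1).2 hc) (not_lt.2 h.2.1)
  exact ⟨mem_cells.2 ⟨h.1, h.2.2⟩, le_of_not_gt (fun hh => hm ⟨h.2.2, hh⟩), h.2.1⟩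

variable (q m n lam) in
noncomputable def fwdT (hlam : ∀ i, lam (i + 1) ≤ lam i) (hsupp : ∀ i, q ≤ i → lam i = 0)
    (t : StdTab q m n lam) :
    ↥(cells q (muOf q lam (fF q m n lam hlam hsupp t).1) (fun _ => 0)) → Fin m :=
  fun c => ⟨tV q m n lam t c.1, (mem_of_mem_mu hlam hsupp t c.2).2.1⟩

variable (q m n lam) in
noncomputable def fwdU (hlam : ∀ i, lam (i + 1) ≤ lam i) (hsupp : ∀ i, q ≤ i → lam i = 0)
    (t : StdTab q m n lam) :
    ↥(conjSkewCells q lam (muOf q lam (fF q m n lam hlam hsupp t).1)) → Fin n :=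
  fun c => ⟨tV q m n lam t (c.1.2, c.1.1) - m, by
    have h := mem_of_mem_conj hlam hsupp t c.2
    have := tV_lt t h.1
    omega⟩

lemma fwdT_ssyt (hlam : ∀ i, lam (i + 1) ≤ lam i) (hsupp : ∀ i, q ≤ i → lam i = 0)
    (t : StdTab q m n lam) :
    SSYT (cells q (muOf q lam (fF q m n lam hlam hsupp t).1) (fun _ => 0))
      (fwdT q m n lam hlam hsupp t) := by
  constructor
  · intro c c' h1 h2
    have hc := (mem_of_mem_mu hlam hsupp t c.2).1
    have hc' := (mem_of_mem_mu hlam hsupp t c'.2).1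
    have he : c'.1 = (c.1.1, c.1.2 + 1) := Prod.ext h1.symm h2
    rw [he] at hc'
    have := (std_row t hc hc').1
    show (fwdT q m n lam hlam hsupp t c : ℕ) ≤ fwdT q m n lam hlam hsupp t c'
    simp only [fwdT, he]
    exact this
  · intro c c' h1 h2
    have hc := (mem_of_mem_mu hlam hsupp t c.2)
    have hc' := (mem_of_mem_mu hlam hsupp t c'.2).1
    have he : c'.1 = (c.1.1 + 1, c.1.2) := Prod.ext h2 h1.symm
    rw [he] at hc'
    have h3 := std_col t hc.1 hc'
    show (fwdT q m n lam hlam hsupp t c : ℕ) < fwdT q m n lam hlam hsupp t c'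
    simp only [fwdT, he]
    rcases lt_or_eq_of_le h3.1 with h | h
    · exact h
    · exact absurd (h3.2 h) (not_le.2 hc.2.1)

lemma fwdU_ssyt (hlam : ∀ i, lam (i + 1) ≤ lam i) (hsupp : ∀ i, q ≤ i → lam i = 0)
    (t : StdTab q m n lam) :
    SSYT (conjSkewCells q lam (muOf q lam (fF q m n lam hlam hsupp t).1))
      (fwdU q m n lam hlam hsupp t) := by
  constructor
  · intro c c' h1 h2
    have hc := mem_of_mem_conj hlam hsupp t c.2
    have hc' := mem_of_mem_conj hlam hsupp t c'.2
    have he : c'.1 = (c.1.1, c.1.2 + 1) := Prod.ext h1.symm h2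
    rw [he] at hc'
    have h3 := (std_col t hc.1 hc'.1).1
    show (fwdU q m n lam hlam hsupp t c : ℕ) ≤ fwdU q m n lam hlam hsupp t c'
    simp only [fwdU, he]
    omega
  · intro c c' h1 h2
    have hc := mem_of_mem_conj hlam hsupp t c.2
    have hc' := mem_of_mem_conj hlam hsupp t c'.2
    have he : c'.1 = (c.1.1 + 1, c.1.2) := Prod.ext h2 h1.symm
    rw [he] at hc'
    have h3 := std_row t hc.1 hc'.1
    show (fwdU q m n lam hlam hsupp t c : ℕ) < fwdU q m n lam hlam hsupp t c'
    simp only [fwdU, he]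
    have : tV q m n lam t (c.1.2, c.1.1) ≠ tV q m n lam t (c.1.2, c.1.1 + 1) := by
      intro hh
      exact absurd (h3.2 hh) (not_lt.2 hc.2.1)
    have h4 := h3.1
    have h5 := hc.2.1
    omega

variable (q m n lam) in
noncomputable def fwd (hlam : ∀ i, lam (i + 1) ≤ lam i) (hsupp : ∀ i, q ≤ i → lam i = 0) :
    StdTab q m n lam → PairTab q m n lam := fun t =>
  ⟨fF q m n lam hlam hsupp t,
   (⟨fwdT q m n lam hlam hsupp t, fwdT_ssyt hlam hsupp t⟩,
    ⟨fwdU q m n lam hlam hsupp t, fwdU_ssyt hlam hsupp t⟩)⟩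
lemma lt_muOf {f : (i : Fin q) → Fin (lam i + 1)} {i j : ℕ} (hi : i < q) :
    j < muOf q lam f i ↔ j < (f ⟨i, hi⟩ : ℕ) := by
  simp [muOf, hi]

lemma muOf_le (f : (i : Fin q) → Fin (lam i + 1)) (i : ℕ) : muOf q lam f i ≤ lam i := by
  unfold muOf
  split
  · exact Nat.lt_succ_iff.1 (f _).2
  · exact Nat.zero_le _

lemma cells_muOf_subset (f : (i : Fin q) → Fin (lam i + 1)) :
    cells q (muOf q lam f) (fun _ => 0) ⊆ cells q lam (fun _ => 0) := by
  intro p hp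
  have h := mem_cells.1 hp
  exact mem_cells.2 ⟨h.1, lt_of_lt_of_le h.2 (muOf_le f p.1)⟩

variable (q m n lam) in
noncomputable def bwdFun (p : PairTab q m n lam) :
    ↥(cells q lam (fun _ => 0)) → Fin (m + n) := fun c =>
  if h : (c.1 : ℕ × ℕ) ∈ cells q (muOf q lam p.1.1) (fun _ => 0) then
    Fin.castAdd n (p.2.1.1 ⟨c.1, h⟩)
  else
    Fin.natAdd m (p.2.2.1 ⟨(c.1.2, c.1.1), by
      have hc := mem_cells.1 c.2
      refine mem_conj.2 ⟨hc.1, ?_, hc.2⟩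
      by_contra hh
      push_neg at hh
      exact h (mem_cells.2 ⟨hc.1, hh⟩)⟩)

lemma bwdFun_pos (p : PairTab q m n lam) (c : ↥(cells q lam (fun _ => 0)))
    (h : (c.1 : ℕ × ℕ) ∈ cells q (muOf q lam p.1.1) (fun _ => 0)) :
    bwdFun q m n lam p c = Fin.castAdd n (p.2.1.1 ⟨c.1, h⟩) := dif_pos h

lemma bwdFun_neg (p : PairTab q m n lam) (c : ↥(cells q lam (fun _ => 0)))
    (h : (c.1 : ℕ × ℕ) ∉ cells q (muOf q lam p.1.1) (fun _ => 0))
    (h' : (c.1.2, c.1.1) ∈ conjSkewCells q lam (muOf q lam p.1.1)) :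
    bwdFun q m n lam p c = Fin.natAdd m (p.2.2.1 ⟨(c.1.2, c.1.1), h'⟩) := dif_neg h

lemma conj_of_not_mu (p : PairTab q m n lam) (c : ↥(cells q lam (fun _ => 0)))
    (h : (c.1 : ℕ × ℕ) ∉ cells q (muOf q lam p.1.1) (fun _ => 0)) :
    (c.1.2, c.1.1) ∈ conjSkewCells q lam (muOf q lam p.1.1) := by
  have hc := mem_cells.1 c.2
  refine mem_conj.2 ⟨hc.1, ?_, hc.2⟩
  by_contra hh
  push_neg at hh
  exact h (mem_cells.2 ⟨hc.1, hh⟩)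

lemma bwd_stdpred (p : PairTab q m n lam) :
    StdPred m n (cells q lam (fun _ => 0)) (bwdFun q m n lam p) := by
  constructor
  · -- rows
    intro c c' h1 h2
    have hc := mem_cells.1 c.2
    have hc' := mem_cells.1 c'.2
    have he : (c'.1 : ℕ × ℕ) = (c.1.1, c.1.2 + 1) := Prod.ext h1.symm h2
    by_cases h : (c.1 : ℕ × ℕ) ∈ cells q (muOf q lam p.1.1) (fun _ => 0)
    · by_cases h' : (c'.1 : ℕ × ℕ) ∈ cells q (muOf q lam p.1.1) (fun _ => 0)
      · rw [bwdFun_pos p c h, bwdFun_pos p c' h']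
        have hle := p.2.1.2.1 ⟨c.1, h⟩ ⟨c'.1, h'⟩ h1 h2
        constructor
        · exact hle
        · intro _
          simp only [Fin.coe_castAdd]
          exact (p.2.1.1 ⟨c.1, h⟩).2
      · rw [bwdFun_pos p c h, bwdFun_neg p c' h' (conj_of_not_mu p c' h')]
        have hx : (p.2.1.1 ⟨c.1, h⟩ : ℕ) < m := (p.2.1.1 ⟨c.1, h⟩).2
        constructor
        · rw [Fin.le_def]
          simp only [Fin.coe_castAdd, Fin.coe_natAdd]
          omega
        · intro hh
          rw [Fin.ext_iff] at hh
          simp only [Fin.coe_castAdd, Fin.coe_natAdd] at hh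
          omega
    · by_cases h' : (c'.1 : ℕ × ℕ) ∈ cells q (muOf q lam p.1.1) (fun _ => 0)
      · exfalso
        have hm := mem_cells.1 h'
        rw [he] at hm
        exact h (mem_cells.2 ⟨hc.1, Nat.lt_of_succ_lt hm.2⟩)
      · rw [bwdFun_neg p c h (conj_of_not_mu p c h),
            bwdFun_neg p c' h' (conj_of_not_mu p c' h')]
        have hlt := p.2.2.2.2 ⟨(c.1.2, c.1.1), conj_of_not_mu p c h⟩
          ⟨(c'.1.2, c'.1.1), conj_of_not_mu p c' h'⟩ h1 h2
        rw [Fin.lt_def] at hlt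
        constructor
        · rw [Fin.le_def]
          simp only [Fin.coe_natAdd]
          omega
        · intro hh
          rw [Fin.ext_iff] at hh
          simp only [Fin.coe_natAdd] at hh
          omega
  · -- columns
    intro c c' h1 h2
    have hc := mem_cells.1 c.2
    have hc' := mem_cells.1 c'.2
    have he : (c'.1 : ℕ × ℕ) = (c.1.1 + 1, c.1.2) := Prod.ext h2 h1.symm
    by_cases h : (c.1 : ℕ × ℕ) ∈ cells q (muOf q lam p.1.1) (fun _ => 0)
    · by_cases h' : (c'.1 : ℕ × ℕ) ∈ cells q (muOf q lam p.1.1) (fun _ => 0)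
      · rw [bwdFun_pos p c h, bwdFun_pos p c' h']
        have hlt := p.2.1.2.2 ⟨c.1, h⟩ ⟨c'.1, h'⟩ h1 h2
        rw [Fin.lt_def] at hlt
        constructor
        · rw [Fin.le_def]
          simp only [Fin.coe_castAdd]
          omega
        · intro hh
          rw [Fin.ext_iff] at hh
          simp only [Fin.coe_castAdd] at hh
          omega
      · rw [bwdFun_pos p c h, bwdFun_neg p c' h' (conj_of_not_mu p c' h')]
        have hx : (p.2.1.1 ⟨c.1, h⟩ : ℕ) < m := (p.2.1.1 ⟨c.1, h⟩).2
        constructor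
        · rw [Fin.le_def]
          simp only [Fin.coe_castAdd, Fin.coe_natAdd]
          omega
        · intro hh
          rw [Fin.ext_iff] at hh
          simp only [Fin.coe_castAdd, Fin.coe_natAdd] at hh
          omega
    · by_cases h' : (c'.1 : ℕ × ℕ) ∈ cells q (muOf q lam p.1.1) (fun _ => 0)
      · exfalso
        have hm := mem_cells.1 h'
        rw [he] at hm
        have hanti := p.1.2 ⟨c.1.1, hc.1⟩ ⟨c.1.1 + 1, by rw [he] at hc'; exact hc'.1⟩
          (by simp [Fin.le_def])
        have h1' : c.1.2 < (p.1.1 ⟨c.1.1 + 1, by rw [he] at hc'; exact hc'.1⟩ : ℕ) :=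
          (lt_muOf _).1 hm.2
        have h2' : ¬ c.1.2 < (p.1.1 ⟨c.1.1, hc.1⟩ : ℕ) := by
          intro hh
          exact h (mem_cells.2 ⟨hc.1, (lt_muOf hc.1).2 hh⟩)
        omega
      · rw [bwdFun_neg p c h (conj_of_not_mu p c h),
            bwdFun_neg p c' h' (conj_of_not_mu p c' h')]
        have hle := p.2.2.2.1 ⟨(c.1.2, c.1.1), conj_of_not_mu p c h⟩
          ⟨(c'.1.2, c'.1.1), conj_of_not_mu p c' h'⟩ h1 h2
        rw [Fin.le_def] at hle
        constructor
        · rw [Fin.le_def]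
          simp only [Fin.coe_natAdd]
          omega
        · intro _
          simp only [Fin.coe_natAdd]
          omega

variable (q m n lam) in
noncomputable def bwd : PairTab q m n lam → StdTab q m n lam := fun p =>
  ⟨bwdFun q m n lam p, bwd_stdpred p⟩
lemma left_inv (hlam : ∀ i, lam (i + 1) ≤ lam i) (hsupp : ∀ i, q ≤ i → lam i = 0)
    (t : StdTab q m n lam) :
    bwd q m n lam (fwd q m n lam hlam hsupp t) = t := by
  apply Subtype.ext
  funext c
  show bwdFun q m n lam (fwd q m n lam hlam hsupp t) c = t.1 c
  by_cases h : (c.1 : ℕ × ℕ) ∈ cells q (muOf q lam (fF q m n lam hlam hsupp t).1) (fun _ => 0)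
  · rw [bwdFun_pos (fwd q m n lam hlam hsupp t) c h]
    apply Fin.ext
    show tV q m n lam t c.1 = (t.1 c : ℕ)
    exact tV_eq t c.2
  · rw [bwdFun_neg (fwd q m n lam hlam hsupp t) c h (conj_of_not_mu (fwd q m n lam hlam hsupp t) c h)]
    apply Fin.ext
    show m + (tV q m n lam t c.1 - m) = (t.1 c : ℕ)
    have hc := mem_cells.1 c.2
    have hm : m ≤ tV q m n lam t c.1 := by
      by_contra hh
      push_neg at hh
      have hlt : c.1.2 < mu0 t c.1.1 := (lt_mu0_iff hsupp t _ _).2 ⟨hc.2, hh⟩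
      exact h (mem_cells.2 ⟨hc.1, by rw [muOf_fF hlam hsupp t hc.1]; exact hlt⟩)
    rw [← tV_eq t c.2]
    omega

lemma pairtab_ext (P1 P2 : PairTab q m n lam) (h1 : P1.1 = P2.1)
    (hT : ∀ (c : ℕ × ℕ) (hc1 : c ∈ cells q (muOf q lam P1.1.1) (fun _ => 0))
        (hc2 : c ∈ cells q (muOf q lam P2.1.1) (fun _ => 0)),
        (P1.2.1.1 ⟨c, hc1⟩ : ℕ) = (P2.2.1.1 ⟨c, hc2⟩ : ℕ))
    (hU : ∀ (c : ℕ × ℕ) (hc1 : c ∈ conjSkewCells q lam (muOf q lam P1.1.1))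
        (hc2 : c ∈ conjSkewCells q lam (muOf q lam P2.1.1)),
        (P1.2.2.1 ⟨c, hc1⟩ : ℕ) = (P2.2.2.1 ⟨c, hc2⟩ : ℕ)) : P1 = P2 := by
  obtain ⟨f1, x1⟩ := P1
  obtain ⟨f2, x2⟩ := P2
  subst h1
  have e1 : x1.1 = x2.1 := Subtype.ext (funext fun c => Fin.ext (hT c.1 c.2 c.2))
  have e2 : x1.2 = x2.2 := Subtype.ext (funext fun c => Fin.ext (hU c.1 c.2 c.2))
  exact congrArg (Sigma.mk f1) (Prod.ext e1 e2)

lemma mu0_bwd (hsupp : ∀ i, q ≤ i → lam i = 0) (p : PairTab q m n lam) (i : Fin q) :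
    mu0 (bwd q m n lam p) (i : ℕ) = (p.1.1 i : ℕ) := by
  have hiff : ∀ j, j < mu0 (bwd q m n lam p) (i : ℕ) ↔ j < (p.1.1 i : ℕ) := by
    intro j
    rw [lt_mu0_iff hsupp]
    constructor
    · rintro ⟨hj, hv⟩
      by_contra hh
      push_neg at hh
      have hcell : ((i : ℕ), j) ∈ cells q lam (fun _ => 0) := mem_cells.2 ⟨i.2, hj⟩
      have hnot : ((i : ℕ), j) ∉ cells q (muOf q lam p.1.1) (fun _ => 0) := by
        intro hmem
        have h2 := (lt_muOf i.2).1 (mem_cells.1 hmem).2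
        exact absurd h2 (not_lt.2 hh)
      rw [tV_eq _ hcell] at hv
      rw [show (bwd q m n lam p).1 = bwdFun q m n lam p from rfl] at hv
      rw [bwdFun_neg p ⟨_, hcell⟩ hnot (conj_of_not_mu p _ hnot)] at hv
      simp only [Fin.coe_natAdd] at hv
      omega
    · intro hj
      have hj' : j < lam i := lt_of_lt_of_le hj (Nat.lt_succ_iff.1 (p.1.1 i).2)
      refine ⟨hj', ?_⟩
      have hcell : ((i : ℕ), j) ∈ cells q lam (fun _ => 0) := mem_cells.2 ⟨i.2, hj'⟩
      have hmem : ((i : ℕ), j) ∈ cells q (muOf q lam p.1.1) (fun _ => 0) :=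
        mem_cells.2 ⟨i.2, (lt_muOf i.2).2 hj⟩
      rw [tV_eq _ hcell]
      rw [show (bwd q m n lam p).1 = bwdFun q m n lam p from rfl]
      rw [bwdFun_pos p ⟨_, hcell⟩ hmem]
      simp only [Fin.coe_castAdd]
      exact (p.2.1.1 ⟨_, hmem⟩).2
  have h1 := hiff (mu0 (bwd q m n lam p) (i : ℕ))
  have h2 := hiff ((p.1.1 i : ℕ))
  omega

lemma right_inv (hlam : ∀ i, lam (i + 1) ≤ lam i) (hsupp : ∀ i, q ≤ i → lam i = 0)
    (p : PairTab q m n lam) :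
    fwd q m n lam hlam hsupp (bwd q m n lam p) = p := by
  have hf : (fwd q m n lam hlam hsupp (bwd q m n lam p)).1 = p.1 := by
    apply Subtype.ext
    funext i
    apply Fin.ext
    exact mu0_bwd hsupp p i
  apply pairtab_ext _ _ hf
  · intro c hc1 hc2
    have hcell : c ∈ cells q lam (fun _ => 0) := cells_muOf_subset p.1.1 hc2
    show tV q m n lam (bwd q m n lam p) c = _
    rw [tV_eq _ hcell]
    rw [show (bwd q m n lam p).1 = bwdFun q m n lam p from rfl]
    rw [bwdFun_pos p ⟨c, hcell⟩ hc2]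
    rfl
  · intro c hc1 hc2
    have hcj := mem_conj.1 hc2
    have hcell : (c.2, c.1) ∈ cells q lam (fun _ => 0) := mem_cells.2 ⟨hcj.1, hcj.2.2⟩
    have hnot : (c.2, c.1) ∉ cells q (muOf q lam p.1.1) (fun _ => 0) := by
      intro hmem
      exact absurd (mem_cells.1 hmem).2 (not_lt.2 hcj.2.1)
    show tV q m n lam (bwd q m n lam p) (c.2, c.1) - m = _
    rw [tV_eq _ hcell]
    rw [show (bwd q m n lam p).1 = bwdFun q m n lam p from rfl]
    rw [bwdFun_neg p ⟨_, hcell⟩ hnot (conj_of_not_mu p _ hnot)]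
    show m + (p.2.2.1 ⟨c, hc2⟩ : ℕ) - m = (p.2.2.1 ⟨c, hc2⟩ : ℕ)
    omega
lemma card_filter_univ {α : Type*} {s : Finset α} (P : α → Prop) [DecidablePred P] :
    ((univ : Finset ↥s).filter fun x => P x.1).card = (s.filter P).card := by
  refine Finset.card_bij (fun a _ => a.1) ?_ ?_ ?_
  · intro a ha
    rw [Finset.mem_filter] at ha ⊢
    exact ⟨a.2, ha.2⟩
  · intro a _ b _ h
    exact Subtype.ext h
  · intro b hb
    rw [Finset.mem_filter] at hb
    exact ⟨⟨b, hb.1⟩, Finset.mem_filter.2 ⟨Finset.mem_univ _, hb.2⟩, rfl⟩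

lemma wtStd_eq (t : StdTab q m n lam) (a : Fin (m + n)) :
    wtStd q m n lam t a
      = ((cells q lam (fun _ => 0)).filter fun p => tV q m n lam t p = (a : ℕ)).card := by
  unfold wtStd
  have h : ((univ : Finset ↥(cells q lam (fun _ => 0))).filter fun c => t.1 c = a)
      = (univ.filter fun c => tV q m n lam t c.1 = (a : ℕ)) := by
    apply Finset.filter_congr
    intro x _
    rw [tV_eq t x.2]
    exact ⟨fun h => congrArg Fin.val h, fun h => Fin.ext h⟩
  rw [h]
  exact card_filter_univ (fun p => tV q m n lam t p = (a : ℕ))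

lemma wt_even (hlam : ∀ i, lam (i + 1) ≤ lam i) (hsupp : ∀ i, q ≤ i → lam i = 0)
    (t : StdTab q m n lam) (a : Fin (m + n)) :
    ((univ : Finset ↥(cells q (muOf q lam (fF q m n lam hlam hsupp t).1) (fun _ => 0))).filter
        fun c => Fin.castAdd n (fwdT q m n lam hlam hsupp t c) = a).card
      = ((cells q (muOf q lam (fF q m n lam hlam hsupp t).1) (fun _ => 0)).filter
          fun p => tV q m n lam t p = (a : ℕ)).card := by
  refine Eq.trans ?_ (card_filter_univ (fun p => tV q m n lam t p = (a : ℕ)))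
  apply congrArg
  apply Finset.filter_congr
  intro x _
  constructor
  · intro h
    exact congrArg Fin.val h
  · intro h
    exact Fin.ext h

lemma wt_odd (hlam : ∀ i, lam (i + 1) ≤ lam i) (hsupp : ∀ i, q ≤ i → lam i = 0)
    (t : StdTab q m n lam) (a : Fin (m + n)) :
    ((univ : Finset ↥(conjSkewCells q lam (muOf q lam (fF q m n lam hlam hsupp t).1))).filter
        fun c => Fin.natAdd m (fwdU q m n lam hlam hsupp t c) = a).card
      = ((conjSkewCells q lam (muOf q lam (fF q m n lam hlam hsupp t).1)).filter
          fun p => tV q m n lam t (p.2, p.1) = (a : ℕ)).card := by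
  refine Eq.trans ?_ (card_filter_univ (fun p : ℕ × ℕ => tV q m n lam t (p.2, p.1) = (a : ℕ)))
  apply congrArg
  apply Finset.filter_congr
  intro x _
  have hm := (mem_of_mem_conj hlam hsupp t x.2).2.1
  constructor
  · intro h
    have h2 : m + (tV q m n lam t (x.1.2, x.1.1) - m) = (a : ℕ) := congrArg Fin.val h
    omega
  · intro h
    apply Fin.ext
    show m + (tV q m n lam t (x.1.2, x.1.1) - m) = (a : ℕ)
    omega

lemma conj_filter_card (mu : ℕ → ℕ) (Q : ℕ × ℕ → Prop) [DecidablePred Q] :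
    ((conjSkewCells q lam mu).filter fun p => Q (p.2, p.1)).card
      = ((cells q lam (fun _ => 0) \ cells q mu (fun _ => 0)).filter Q).card := by
  unfold conjSkewCells
  rw [Finset.filter_image, Finset.card_image_of_injective _ Prod.swap_injective]
  apply congrArg
  apply Finset.filter_congr
  intro x _
  exact Iff.rfl

lemma split_card (f : (i : Fin q) → Fin (lam i + 1)) (Q : ℕ × ℕ → Prop) [DecidablePred Q] :
    ((cells q lam (fun _ => 0)).filter Q).card
      = ((cells q (muOf q lam f) (fun _ => 0)).filter Q).card
        + ((cells q lam (fun _ => 0) \ cells q (muOf q lam f) (fun _ => 0)).filter Q).card := by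
  have hdis : Disjoint ((cells q (muOf q lam f) (fun _ => 0)).filter Q)
      ((cells q lam (fun _ => 0) \ cells q (muOf q lam f) (fun _ => 0)).filter Q) :=
    Finset.disjoint_filter_filter disjoint_sdiff_self_right
  rw [← Finset.card_union_of_disjoint hdis, ← Finset.filter_union,
      Finset.union_sdiff_of_subset (cells_muOf_subset f)]

end Aux

/-- Standard tableaux of shape `λ` with entries in the graded ordered
set `[m + n]` are in weight-preserving bijection with pairs consisting of a
semistandard tableau of shape `μ` in the even alphabet `[m]` and a semistandard
tableau of the conjugate skew shape `λ'/μ'` in the odd alphabet `[n]`, over all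
partitions `μ ⊆ λ`. -/
theorem standard_tab_equiv_pairs
    (hlam : ∀ i, lam (i + 1) ≤ lam i) (hsupp : ∀ i, q ≤ i → lam i = 0) :
    ∃ e : StdTab q m n lam ≃ PairTab q m n lam,
      ∀ (t : StdTab q m n lam) (a : Fin (m + n)),
        wtStd q m n lam t a = wtPair q m n lam (e t) a := by
  refine ⟨⟨fwd q m n lam hlam hsupp, bwd q m n lam,
    left_inv hlam hsupp, right_inv hlam hsupp⟩, ?_⟩
  intro t a
  show wtStd q m n lam t a = wtPair q m n lam (fwd q m n lam hlam hsupp t) a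
  have key : wtPair q m n lam (fwd q m n lam hlam hsupp t) a
      = ((univ : Finset ↥(cells q (muOf q lam (fF q m n lam hlam hsupp t).1) (fun _ => 0))).filter
          fun c => Fin.castAdd n (fwdT q m n lam hlam hsupp t c) = a).card
        + ((univ : Finset ↥(conjSkewCells q lam (muOf q lam (fF q m n lam hlam hsupp t).1))).filter
            fun c => Fin.natAdd m (fwdU q m n lam hlam hsupp t c) = a).card := rfl
  rw [key, wt_even hlam hsupp t a, wt_odd hlam hsupp t a,
      conj_filter_card (muOf q lam (fF q m n lam hlam hsupp t).1)
        (fun p => tV q m n lam t p = (a : ℕ)),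
      wtStd_eq t a]
  exact split_card (fF q m n lam hlam hsupp t).1 _

end HookBijection
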